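/- arXiv:1908.10805 — 5 statements merged into one kernel-verified Lean document; each statement's English description precedes it below -/
import Mathlib

section
/- The function ψ : ℕ → ℕ defined by ψ(n) = max over all x with 2^n ≤ x < 2^{n+1} of the least k such that Code.evaln k (Code.ofNatCode (K x)) 0 = some x (the runtime of the shortest program for x) is not computable. -/
open scoped Classical
open Nat.Partrec Nat.Partrec.Code

theorem K_exists (x : ℕ) : ∃ e : ℕ, (Code.ofNatCode e).eval 0 = Part.some x :=
  ⟨Code.encodeCode (Code.const x), by
    rw [← Code.encodeCode_eq, ← Code.ofNatCode_eq, Denumerable.ofNat_encode]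
    exact Code.eval_const x 0⟩

/-- Kolmogorov complexity: the least index `e` such that program `e` on input `0` outputs `x`. -/
noncomputable def K (x : ℕ) : ℕ := Nat.find (K_exists x)

theorem T_exists (x : ℕ) : ∃ k : ℕ, Code.evaln k (Code.ofNatCode (K x)) 0 = some x := by
  have h : x ∈ (Code.ofNatCode (K x)).eval 0 := by
    have := Nat.find_spec (K_exists x)
    rw [show K x = Nat.find (K_exists x) from rfl, this]
    exact Part.mem_some x
  obtain ⟨k, hk⟩ := Code.evaln_complete.mp h
  exact ⟨k, hk⟩

/-- The running time of the shortest program for `x`. -/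
noncomputable def T (x : ℕ) : ℕ := Nat.find (T_exists x)

/-- `ψ n` : the maximal running time of a shortest program, over strings of length `n`. -/
noncomputable def ψ (n : ℕ) : ℕ := (Finset.Ico (2 ^ n) (2 ^ (n + 1))).sup T

private lemma computable_nat_find {q : ℕ → ℕ → Bool}
    (hq : Computable fun a : ℕ × ℕ => q a.1 a.2) (h : ∀ x, ∃ n, q x n = true) :
    Computable fun x => Nat.find (h x) := by
  have hp2 : Computable₂ fun (x n : ℕ) => q x n := hq
  refine (Partrec.rfind hp2.partrec₂).of_eq fun x => ?_
  rw [PFun.coe_val, Part.eq_some_iff]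
  refine Nat.mem_rfind.mpr ⟨?_, fun {m} hm => ?_⟩
  · rw [PFun.coe_val, Part.mem_some_iff]
    exact (Nat.find_spec (h x)).symm
  · rw [PFun.coe_val, Part.mem_some_iff]
    exact (Bool.not_eq_true _ ▸ Nat.find_min (h x) hm : _ = false).symm

theorem psi_not_computable : ¬ Computable ψ := by
  intro hψ
  -- K is injective
  have hKx : ∀ x, (Code.ofNatCode (K x)).eval 0 = Part.some x := fun x => Nat.find_spec (K_exists x)
  have hKinj : Function.Injective K := by
    intro x y hxy
    have hx := hKx x
    rw [hxy, hKx y] at hx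
    exact (Part.some_inj.mp hx).symm
  -- a computable bound on runtimes
  set S : ℕ → ℕ := fun n => Nat.rec (T 0) (fun i ih => ih + ψ i) n with hS
  have hSmono : Monotone S := by
    refine monotone_nat_of_le_succ fun n => ?_
    simp [hS]
  have hT0S : ∀ n, T 0 ≤ S n := fun n => hSmono (Nat.zero_le n)
  have hψS : ∀ i n, i < n → ψ i ≤ S n := by
    intro i n hin
    calc ψ i ≤ S (i + 1) := by simp [hS]
    _ ≤ S n := hSmono hin
  set B : ℕ → ℕ := fun x => S (x + 1) with hBdef
  have hTB : ∀ x, T x ≤ B x := by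
    intro x
    rcases Nat.eq_zero_or_pos x with h0 | h0
    · subst h0; exact hT0S 1
    · have h1 : x ∈ Finset.Ico (2 ^ Nat.log 2 x) (2 ^ (Nat.log 2 x + 1)) := by
        rw [Finset.mem_Ico]
        exact ⟨Nat.pow_log_le_self 2 h0.ne', Nat.lt_pow_succ_log_self one_lt_two x⟩
      have h2 : T x ≤ ψ (Nat.log 2 x) := Finset.le_sup h1
      exact h2.trans (hψS _ _ (Nat.lt_succ_of_le (Nat.log_le_self 2 x)))
  have hBspec : ∀ x, Code.evaln (B x) (Code.ofNatCode (K x)) 0 = some x := by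
    intro x
    have := Nat.find_spec (T_exists x)
    exact Code.evaln_mono (hTB x) this
  -- B is computable
  have hSc : Computable S := by
    have := Computable.nat_rec (Computable.id (α := ℕ)) (Computable.const (T 0))
      ((Primrec.nat_add.to_comp.comp (Computable.snd.comp Computable.snd)
        (hψ.comp (Computable.fst.comp Computable.snd))).to₂)
    exact this.of_eq fun n => by simp [hS]
  have hBc : Computable B := hSc.comp (Primrec.succ.to_comp)
  -- K is computable
  have hfind : ∀ x, ∃ e, decide (Code.evaln (B x) (Code.ofNatCode e) 0 = some x) = true :=
    fun x => ⟨K x, decide_eq_true (hBspec x)⟩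
  have hKeq : ∀ x, K x = Nat.find (hfind x) := by
    intro x
    apply le_antisymm
    · refine Nat.find_min' (K_exists x) ?_
      have := of_decide_eq_true (Nat.find_spec (hfind x))
      exact Part.eq_some_iff.mpr (Code.evaln_sound this)
    · exact Nat.find_min' (hfind x) (decide_eq_true (hBspec x))
  have hpredc : Computable fun a : ℕ × ℕ =>
      decide (Code.evaln (B a.1) (Code.ofNatCode a.2) 0 = some a.1) := by
    have h1 : Computable fun a : ℕ × ℕ => Code.evaln (B a.1) (Code.ofNatCode a.2) 0 := by
      have := Code.primrec_evaln.to_comp.comp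
        (((hBc.comp Computable.fst).pair ((Computable.ofNat Code).comp Computable.snd)).pair
          (Computable.const 0))
      exact this.of_eq fun a => by simp [Code.ofNatCode_eq]
    exact Primrec.eq.decide.to_comp.comp h1 (Computable.option_some.comp Computable.fst)
  have hKc : Computable K :=
    (computable_nat_find
      (q := fun x e => decide (Code.evaln (B x) (Code.ofNatCode e) 0 = some x))
      hpredc hfind).of_eq fun x => (hKeq x).symm
  -- K is unbounded
  have hg_exists : ∀ e, ∃ x, e < K x := by
    intro e
    by_contra hcon
    push_neg at hcon
    have : Function.Injective fun i : Fin (e + 2) => (⟨K i, Nat.lt_succ_of_le (hcon i)⟩ : Fin (e + 1)) := by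
      intro a b hab
      exact Fin.val_injective (hKinj (congrArg Fin.val hab))
    have := Fintype.card_le_of_injective _ this
    simp at this
  have hg_exists' : ∀ e, ∃ x, decide (e < K x) = true :=
    fun e => (hg_exists e).imp fun x hx => decide_eq_true hx
  set g : ℕ → ℕ := fun e => Nat.find (hg_exists' e) with hgdef
  have hltc : Computable fun a : ℕ × ℕ => decide (a.1 < K a.2) :=
    Primrec.nat_lt.decide.to_comp.comp Computable.fst (hKc.comp Computable.snd)
  have hgc : Computable g :=
    computable_nat_find (q := fun e x => decide (e < K x)) hltc hg_exists'
  -- diagonalization via the recursion theorem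
  have hfc : Computable fun c : Code => Code.const (g (Encodable.encode c)) :=
    Code.primrec_const.to_comp.comp (hgc.comp Computable.encode)
  obtain ⟨c, hc⟩ := Code.fixed_point hfc
  set e := Encodable.encode c with he
  have h1 : Code.eval c 0 = Part.some (g e) := by
    rw [← hc]; exact Code.eval_const _ _
  have h2 : (Code.ofNatCode e).eval 0 = Part.some (g e) := by
    rw [← Code.ofNatCode_eq, he, Denumerable.ofNat_encode]
    exact h1
  have h3 : K (g e) ≤ e := Nat.find_min' (K_exists (g e)) h2
  have h4 : e < K (g e) := of_decide_eq_true (Nat.find_spec (hg_exists' e))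
  omega
end

section
/- Let ψ : ℕ → ℕ be defined by ψ(n) = max over all x with 2^n ≤ x < 2^{n+1} of the least k such that Code.evaln k (Code.ofNatCode (K x)) 0 = some x. Then ψ grows faster than any computable function: for every computable g : ℕ → ℕ there exist infinitely many n with ψ(n) > g(n). -/
open scoped Classical
open Nat.Partrec Nat.Partrec.Code

/-! ### Auxiliary machinery -/

/-- Running maximum of `g` on `[0, x]`. -/
def Gmax (g : ℕ → ℕ) (x : ℕ) : ℕ :=
  Nat.rec (motive := fun _ => ℕ) (g 0) (fun y IH => max IH (g (y + 1))) x

theorem gmax_le (g : ℕ → ℕ) : ∀ {n x : ℕ}, n ≤ x → g n ≤ Gmax g x := by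
  intro n x h
  induction x with
  | zero =>
    have : n = 0 := Nat.le_zero.mp h
    subst this; exact le_rfl
  | succ x ih =>
    rcases Nat.lt_succ_iff_lt_or_eq.mp (Nat.lt_succ_of_le h) with h' | h'
    · exact le_trans (ih (Nat.lt_succ_iff.mp h')) (le_max_left _ _)
    · subst h'; exact le_max_right _ _

/-- `badUpto g m x = true` iff no program with index `< m` outputs `x` within `Gmax g x` steps. -/
def badUpto (g : ℕ → ℕ) (m x : ℕ) : Bool :=
  Nat.rec (motive := fun _ => Bool) true
    (fun e IH => IH && !decide (Code.evaln (Gmax g x) (Denumerable.ofNat Code e) 0 = some x)) m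

theorem badUpto_spec {g : ℕ → ℕ} {m x : ℕ} (h : badUpto g m x = true) :
    ∀ e < m, Code.evaln (Gmax g x) (Denumerable.ofNat Code e) 0 ≠ some x := by
  induction m with
  | zero => intro e he; omega
  | succ m ih =>
    have h' : badUpto g m x = true ∧
        (!decide (Code.evaln (Gmax g x) (Denumerable.ofNat Code m) 0 = some x)) = true :=
      Bool.and_eq_true _ _ |>.mp h
    intro e he
    rcases Nat.lt_succ_iff_lt_or_eq.mp he with he' | he'
    · exact ih h'.1 e he'
    · subst he'
      simpa using h'.2

theorem badUpto_of {g : ℕ → ℕ} {m x : ℕ}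
    (h : ∀ e < m, Code.evaln (Gmax g x) (Denumerable.ofNat Code e) 0 ≠ some x) :
    badUpto g m x = true := by
  induction m with
  | zero => rfl
  | succ m ih =>
    show (badUpto g m x && _) = true
    rw [Bool.and_eq_true]
    refine ⟨ih fun e he => h e (Nat.lt_succ_of_lt he), ?_⟩
    simpa using h m (Nat.lt_succ_self m)

/-- The selection predicate. -/
def PP (g : ℕ → ℕ) (N : ℕ) (c : Code) (x : ℕ) : Bool :=
  decide (2 ^ N ≤ x) && badUpto g (Encodable.encode c + 1) x

/-- Search for some `x < n` with `PP g N c x`. -/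
def sel (g : ℕ → ℕ) (N : ℕ) (c : Code) (n : ℕ) : Option ℕ :=
  Nat.rec (motive := fun _ => Option ℕ) none
    (fun y IH => Option.casesOn IH (cond (PP g N c y) (some y) none) (fun v => some v)) n

theorem sel_spec {g : ℕ → ℕ} {N : ℕ} {c : Code} :
    ∀ {n x : ℕ}, sel g N c n = some x → PP g N c x = true := by
  intro n
  induction n with
  | zero => intro x h; exact absurd h (by simp [sel])
  | succ n ih =>
    intro x h
    rcases hs : sel g N c n with _ | v
    · have h' : cond (PP g N c n) (some n) none = some x := by
        rw [show sel g N c (n+1) = Option.casesOn (sel g N c n)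
          (cond (PP g N c n) (some n) none) (fun v => some v) from rfl, hs] at h
        exact h
      rcases hP : PP g N c n with _ | _
      · rw [hP] at h'; exact absurd h' (by simp)
      · rw [hP] at h'; simp at h'; subst h'; exact hP
    · have h' : some v = some x := by
        rw [show sel g N c (n+1) = Option.casesOn (sel g N c n)
          (cond (PP g N c n) (some n) none) (fun v => some v) from rfl, hs] at h
        exact h
      rw [← Option.some_inj.mp h']
      exact ih hs

theorem sel_isSome {g : ℕ → ℕ} {N : ℕ} {c : Code} {y : ℕ} (hP : PP g N c y = true) :
    ∀ {n : ℕ}, y < n → ∃ x, sel g N c n = some x := by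
  intro n
  induction n with
  | zero => intro h; omega
  | succ n ih =>
    intro h
    have hstep : sel g N c (n+1) = Option.casesOn (sel g N c n)
        (cond (PP g N c n) (some n) none) (fun v => some v) := rfl
    rcases Nat.lt_succ_iff_lt_or_eq.mp h with h' | h'
    · obtain ⟨x, hx⟩ := ih h'
      exact ⟨x, by rw [hstep, hx]⟩
    · subst h'
      rcases hs : sel g N c y with _ | v
      · exact ⟨y, by rw [hstep, hs, hP]; rfl⟩
      · exact ⟨v, by rw [hstep, hs]⟩

/-- The diagonal function. -/
def FF (g : ℕ → ℕ) (N : ℕ) (c : Code) : ℕ :=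
  (sel g N c (2 ^ N + Encodable.encode c + 2)).getD 0

/-! ### Computability -/

theorem gmax_computable {g : ℕ → ℕ} (hg : Computable g) : Computable (Gmax g) :=
  (Computable.nat_rec (f := @id ℕ) (g := fun _ => g 0)
    (h := fun _ p => max p.2 (g (p.1 + 1))) Computable.id (Computable.const (g 0))
    ((Primrec.nat_max.to_comp).comp (Computable.snd.comp Computable.snd)
      (hg.comp (Computable.succ.comp (Computable.fst.comp Computable.snd))))).of_eq
    fun n => rfl

set_option maxHeartbeats 1000000 in
theorem badUpto_computable {g : ℕ → ℕ} (hg : Computable g) : Computable₂ (badUpto g) := by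
  have heval : Computable fun r : (ℕ × ℕ) × ℕ × Bool =>
      Code.evaln (Gmax g r.1.2) (Denumerable.ofNat Code r.2.1) 0 :=
    Code.primrec_evaln.to_comp.comp
      (Computable.pair
        (Computable.pair ((gmax_computable hg).comp (Computable.snd.comp Computable.fst))
          ((Computable.ofNat Code).comp (Computable.fst.comp Computable.snd)))
        (Computable.const 0))
  have hdec : Computable fun r : (ℕ × ℕ) × ℕ × Bool =>
      decide (Code.evaln (Gmax g r.1.2) (Denumerable.ofNat Code r.2.1) 0 = some r.1.2) :=
    (Primrec.eq.decide.to_comp).comp heval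
      (Primrec.option_some.to_comp.comp (Computable.snd.comp Computable.fst))
  exact (Computable.nat_rec (f := fun p : ℕ × ℕ => p.1) (g := fun _ => true)
    (h := fun p q => q.2 &&
      !decide (Code.evaln (Gmax g p.2) (Denumerable.ofNat Code q.1) 0 = some p.2))
    Computable.fst (Computable.const true)
    ((Primrec.and.to_comp).comp (Computable.snd.comp Computable.snd)
      (Primrec.not.to_comp.comp hdec))).of_eq fun p => rfl

set_option maxHeartbeats 1000000 in
theorem pp_computable {g : ℕ → ℕ} (hg : Computable g) (N : ℕ) : Computable₂ (PP g N) := by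
  have h1 : Computable fun p : Code × ℕ => decide (2 ^ N ≤ p.2) :=
    (Primrec.nat_le.comp (Primrec.const (2 ^ N)) Primrec.snd).decide.to_comp
  have h2 : Computable fun p : Code × ℕ => badUpto g (Encodable.encode p.1 + 1) p.2 :=
    (badUpto_computable hg).comp
      (Computable.succ.comp (Computable.encode.comp Computable.fst)) Computable.snd
  exact (Primrec.and.to_comp).comp h1 h2

set_option maxHeartbeats 1000000 in
theorem sel_computable {g : ℕ → ℕ} (hg : Computable g) (N : ℕ) : Computable₂ (sel g N) := by
  have hstep : Computable₂ fun (p : Code × ℕ) (q : ℕ × Option ℕ) =>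
      Option.casesOn (motive := fun _ => Option ℕ) q.2
        (cond (PP g N p.1 q.1) (some q.1) none) (fun v => some v) := by
    refine Computable.option_casesOn (Computable.snd.comp Computable.snd) ?_ ?_
    · exact Computable.cond
        ((pp_computable hg N).comp (Computable.fst.comp Computable.fst)
          (Computable.fst.comp Computable.snd))
        (Primrec.option_some.to_comp.comp (Computable.fst.comp Computable.snd))
        (Computable.const none)
    · exact Primrec.option_some.to_comp.comp Computable.snd
  exact (Computable.nat_rec (f := fun p : Code × ℕ => p.2) (g := fun _ => (none : Option ℕ))
    (h := fun (p : Code × ℕ) (q : ℕ × Option ℕ) =>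
      Option.casesOn (motive := fun _ => Option ℕ) q.2
        (cond (PP g N p.1 q.1) (some q.1) none) (fun v => some v))
    Computable.snd (Computable.const none) hstep).of_eq fun p => rfl

set_option maxHeartbeats 1000000 in
theorem ff_computable {g : ℕ → ℕ} (hg : Computable g) (N : ℕ) : Computable (FF g N) := by
  have hb : Computable fun c : Code => 2 ^ N + Encodable.encode c + 2 :=
    (Primrec.nat_add.comp
      (Primrec.nat_add.comp (Primrec.const (2 ^ N)) Primrec.encode)
      (Primrec.const 2)).to_comp
  exact Computable.option_getD ((sel_computable hg N).comp Computable.id hb)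
    (Computable.const 0)

/-! ### Basic facts about `K` and `T` -/

theorem K_spec (x : ℕ) : (Code.ofNatCode (K x)).eval 0 = Part.some x :=
  Nat.find_spec (K_exists x)

theorem K_min {x e : ℕ} (h : e < K x) : (Code.ofNatCode e).eval 0 ≠ Part.some x :=
  Nat.find_min (K_exists x) h

theorem K_le {x e : ℕ} (h : (Code.ofNatCode e).eval 0 = Part.some x) : K x ≤ e :=
  Nat.find_min' (K_exists x) h

theorem K_inj : Function.Injective K := by
  intro a b h
  have ha := K_spec a
  rw [h, K_spec b] at ha
  exact (Part.some_inj.mp ha).symm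

theorem T_spec (x : ℕ) : Code.evaln (T x) (Code.ofNatCode (K x)) 0 = some x :=
  Nat.find_spec (T_exists x)

theorem exists_big_K (N b : ℕ) : ∃ x, 2 ^ N ≤ x ∧ x < 2 ^ N + b + 2 ∧ b < K x := by
  by_contra h
  push_neg at h
  have hcard : (Finset.Ico (2 ^ N) (2 ^ N + b + 2)).card ≤ (Finset.range (b + 1)).card := by
    apply Finset.card_le_card_of_injOn K
    · intro x hx
      rw [Finset.mem_coe, Finset.mem_Ico] at hx
      rw [Finset.mem_coe, Finset.mem_range]
      have := h x hx.1 hx.2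
      omega
    · exact K_inj.injOn
  rw [Nat.card_Ico, Finset.card_range] at hcard
  omega

theorem evaln_K {g : ℕ → ℕ} {N x : ℕ} (hN : ∀ n, N ≤ n → ψ n ≤ g n) (hx : 2 ^ N ≤ x) :
    Code.evaln (Gmax g x) (Code.ofNatCode (K x)) 0 = some x := by
  have hx0 : x ≠ 0 := by
    have := Nat.one_le_two_pow (n := N)
    omega
  set n := Nat.log 2 x with hn
  have h1 : 2 ^ n ≤ x := Nat.pow_log_le_self 2 hx0
  have h2 : x < 2 ^ (n + 1) := Nat.lt_pow_succ_log_self one_lt_two x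
  have hTψ : T x ≤ ψ n := Finset.le_sup (Finset.mem_Ico.mpr ⟨h1, h2⟩)
  have hNn : N ≤ n := (Nat.le_log_iff_pow_le one_lt_two hx0).mpr hx
  have hgG : g n ≤ Gmax g x := gmax_le g (Nat.log_le_self 2 x)
  have hT : T x ≤ Gmax g x := le_trans hTψ (le_trans (hN n hNn) hgG)
  exact Option.mem_def.mp (Code.evaln_mono hT (Option.mem_def.mpr (T_spec x)))

theorem psi_grows_faster_than_any_computable :
    ∀ g : ℕ → ℕ, Computable g → ∀ N : ℕ, ∃ n : ℕ, N ≤ n ∧ g n < ψ n := by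
  by_contra hcon
  push_neg at hcon
  obtain ⟨g, hg, N, hN⟩ := hcon
  obtain ⟨c, hc⟩ := Code.fixed_point (Code.primrec_const.to_comp.comp (ff_computable hg N))
  set x₀ := FF g N c with hx₀
  have heval : c.eval 0 = Part.some x₀ := by
    rw [← hc]; exact Code.eval_const _ _
  have hKle : K x₀ ≤ Encodable.encode c := by
    apply K_le
    rw [← Code.ofNatCode_eq, Denumerable.ofNat_encode]
    exact heval
  -- find a witness with large complexity
  obtain ⟨x₁, hx₁N, hx₁lt, hx₁K⟩ := exists_big_K N (Encodable.encode c)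
  have hP₁ : PP g N c x₁ = true := by
    unfold PP
    rw [Bool.and_eq_true]
    refine ⟨decide_eq_true hx₁N, badUpto_of fun e he hev => ?_⟩
    have he' : e < K x₁ := by omega
    have hoc : Denumerable.ofNat Code e = Code.ofNatCode e := congrFun Code.ofNatCode_eq e
    rw [hoc] at hev
    exact K_min he' (Part.eq_some_iff.mpr (Code.evaln_sound (Option.mem_def.mpr hev)))
  obtain ⟨x', hx'⟩ := sel_isSome hP₁ (show x₁ < 2 ^ N + Encodable.encode c + 2 from hx₁lt)
  have hx0eq : x₀ = x' := by
    rw [hx₀]; unfold FF; rw [hx']; rfl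
  have hP0 : PP g N c x₀ = true := by rw [hx0eq]; exact sel_spec hx'
  unfold PP at hP0
  rw [Bool.and_eq_true] at hP0
  have hx0N : 2 ^ N ≤ x₀ := of_decide_eq_true hP0.1
  have hev := evaln_K hN hx0N
  have hbad := badUpto_spec hP0.2 (K x₀) (by omega)
  have hoc : Denumerable.ofNat Code (K x₀) = Code.ofNatCode (K x₀) :=
    congrFun Code.ofNatCode_eq (K x₀)
  rw [hoc] at hbad
  exact hbad hev
end

section
/- Let ψ : ℕ → ℕ be defined by ψ(n) = max over all x with 2^n ≤ x < 2^{n+1} of the least k such that Code.evaln k (Code.ofNatCode (K x)) 0 = some x. If there exists a computable function g : ℕ → ℕ with ψ(n) ≤ g(n) for all n, then the Kolmogorov complexity function K : ℕ → ℕ is computable. -/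
open scoped Classical
open Nat.Partrec Nat.Partrec.Code

theorem log2_primrec : Primrec (fun x => Nat.log 2 x) := by
  have : Primrec fun x => Nat.findGreatest (fun n => 2 ^ n ≤ x) x :=
    Primrec.nat_findGreatest Primrec.id
      ((PrimrecRel.comp Primrec.nat_le ((Primrec₂.unpaired'.1 Nat.Primrec.pow).comp
        (Primrec.const 2) Primrec.snd) Primrec.fst))
  refine this.of_eq fun x => ?_
  rcases Nat.eq_zero_or_pos x with rfl | hx
  · simp [Nat.findGreatest_eq_zero_iff]
  · refine le_antisymm ?_ (Nat.le_findGreatest (Nat.log_le_self 2 x) (Nat.pow_log_le_self 2 hx.ne'))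
    exact (Nat.le_log_iff_pow_le one_lt_two hx.ne').2
      (Nat.findGreatest_spec (P := fun n => 2 ^ n ≤ x) (Nat.log_le_self 2 x)
        (Nat.pow_log_le_self 2 hx.ne'))

theorem K_computable_of_computable_bound_on_psi
    (g : ℕ → ℕ) (hg : Computable g) (hbound : ∀ n : ℕ, ψ n ≤ g n) :
    Computable K := by
  classical
  set t : ℕ → ℕ := fun x => g (Nat.log 2 x) + T 0 with ht
  have htime : ∀ x, T x ≤ t x := by
    intro x
    rcases Nat.eq_zero_or_pos x with rfl | hx
    · exact Nat.le_add_left _ _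
    · refine le_trans (le_trans ?_ (hbound (Nat.log 2 x))) (Nat.le_add_right _ _)
      exact Finset.le_sup (Finset.mem_Ico.mpr
        ⟨Nat.pow_log_le_self 2 hx.ne', Nat.lt_pow_succ_log_self (by norm_num) x⟩)
  have hPtrue : ∀ x, Code.evaln (t x) (Code.ofNatCode (K x)) 0 = some x := fun x =>
    Code.evaln_mono (htime x) (Nat.find_spec (T_exists x))
  have hPmin : ∀ x e, e < K x → Code.evaln (t x) (Code.ofNatCode e) 0 ≠ some x := by
    intro x e he hEv
    exact Nat.find_min (K_exists x) he (Part.eq_some_iff.mpr (Code.evaln_sound hEv))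
  -- computability of t
  have ht' : Computable t :=
    (Primrec.nat_add.to_comp.comp (hg.comp log2_primrec.to_comp) (Computable.const (T 0)))
  -- the decidable predicate
  have hev : Computable fun p : ℕ × ℕ =>
      Code.evaln (t p.1) (Denumerable.ofNat Code p.2) 0 :=
    Code.primrec_evaln.to_comp.comp
      (Computable.pair (Computable.pair (ht'.comp Computable.fst)
        ((Computable.ofNat Code).comp Computable.snd)) (Computable.const 0))
  have hP : Computable fun p : ℕ × ℕ =>
      decide (Code.evaln (t p.1) (Denumerable.ofNat Code p.2) 0 = some p.1) :=
    Primrec.eq.decide.to_comp.comp hev (Computable.option_some.comp Computable.fst)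
  have hP2 : Computable₂ fun (x e : ℕ) =>
      decide (Code.evaln (t x) (Denumerable.ofNat Code e) 0 = some x) := hP
  have H : Partrec fun x => Nat.rfind fun e =>
      Part.some (decide (Code.evaln (t x) (Denumerable.ofNat Code e) 0 = some x)) :=
    Partrec.rfind hP2.partrec₂
  refine H.of_eq fun x => Part.eq_some_iff.mpr ?_
  refine Nat.mem_rfind.mpr ?_
  exact ⟨Part.mem_some_iff.mpr (by simp only [Code.ofNatCode_eq]; simp [hPtrue x]),
    fun {m} hm => Part.mem_some_iff.mpr (by simp only [Code.ofNatCode_eq]; simp [hPmin x m hm])⟩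
end

section
/- Define β(n) = max over all x with 2^n ≤ x < 2^{n+1} of Code.encodeCode (Code.const x), and f(n) = max over all x with 2^n ≤ x < 2^{n+1} and all b ≤ β(n) of ld_b(x) - ld_{b+1}(x) (truncated subtraction on ℕ). Then f grows faster than any computable function: for every computable g : ℕ → ℕ there exist infinitely many n with f(n) > g(n). -/
open scoped Classical
open Nat.Partrec Nat.Partrec.Code

theorem ld_exists (b x : ℕ) :
    ∃ k : ℕ, ∃ c : Code, Code.encodeCode c ≤ K x + b ∧ Code.evaln k c 0 = some x := by
  obtain ⟨k, hk⟩ := T_exists x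
  refine ⟨k, Code.ofNatCode (K x), ?_, hk⟩
  rw [← Code.encodeCode_eq, ← Code.ofNatCode_eq, Denumerable.encode_ofNat]
  exact Nat.le_add_right _ _

/-- The logical depth of `x` at significance level `b`. -/
noncomputable def ld (b x : ℕ) : ℕ := Nat.find (ld_exists b x)

/-- `β n` : the maximal index of `Code.const x` over strings `x` of length `n`. -/
noncomputable def β (n : ℕ) : ℕ :=
  (Finset.Ico (2 ^ n) (2 ^ (n + 1))).sup fun x => Code.encodeCode (Code.const x)

/-- `f n` : the maximal decrease in logical depth for strings of length `n`. -/
noncomputable def f (n : ℕ) : ℕ :=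
  (Finset.Ico (2 ^ n) (2 ^ (n + 1))).sup fun x =>
    (Finset.range (β n + 1)).sup fun b => ld b x - ld (b + 1) x

/-! ### Auxiliary lemmas -/

lemma aux_ofNat_encode (c : Code) : Code.ofNatCode (Code.encodeCode c) = c := by
  rw [← Code.encodeCode_eq, ← Code.ofNatCode_eq, Denumerable.ofNat_encode]

lemma aux_evaln_const : ∀ (x k : ℕ), x < k → Code.evaln k (Code.const x) 0 = some x
  | 0, k + 1, _ => by simp [Code.evaln, Code.const]
  | x + 1, k + 1, h => by
    have ih := aux_evaln_const x (k + 1) (by omega)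
    have hx : x ≤ k := by omega
    simp [Code.const, Code.evaln, ih, hx]

lemma aux_encode_const_strictMono : StrictMono fun x => Code.encodeCode (Code.const x) := by
  apply strictMono_nat_of_lt_succ
  intro x
  have h := Nat.right_le_pair 1 (Code.encodeCode (Code.const x))
  show Code.encodeCode (Code.const x) < Code.encodeCode (Code.comp Code.succ (Code.const x))
  simp only [Code.encodeCode]
  omega

lemma aux_β_eq (n : ℕ) : β n = Code.encodeCode (Code.const (2 ^ (n + 1) - 1)) := by
  have h1 : (1 : ℕ) ≤ 2 ^ n := Nat.one_le_two_pow
  have h2 : 2 ^ (n + 1) = 2 * 2 ^ n := by ring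
  apply le_antisymm
  · apply Finset.sup_le
    intro x hx
    rw [Finset.mem_Ico] at hx
    exact aux_encode_const_strictMono.monotone (by omega)
  · exact Finset.le_sup (f := fun x => Code.encodeCode (Code.const x))
      (s := Finset.Ico (2 ^ n) (2 ^ (n + 1))) (by rw [Finset.mem_Ico]; omega)

/-- `K x` is at most the index of any code computing `x` from `0`. -/
lemma aux_K_le {x : ℕ} (c : Code) (hc : Code.eval c 0 = Part.some x) :
    K x ≤ Code.encodeCode c :=
  Nat.find_min' (K_exists x) (by rw [aux_ofNat_encode]; exact hc)

lemma aux_T_le_ld_zero (x : ℕ) : T x ≤ ld 0 x := by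
  obtain ⟨c, hc1, hc2⟩ := Nat.find_spec (ld_exists 0 x)
  have hmem : x ∈ Code.evaln (ld 0 x) c 0 := by rw [Option.mem_def]; exact hc2
  have hev : Code.eval c 0 = Part.some x := Part.eq_some_iff.2 (Code.evaln_sound hmem)
  have hle : Code.encodeCode c = K x :=
    le_antisymm (by simpa using hc1) (aux_K_le c hev)
  have hcc : c = Code.ofNatCode (K x) := by rw [← hle, aux_ofNat_encode]
  exact Nat.find_le (by rw [← hcc]; exact hc2)

/-- Telescoping bound. -/
lemma aux_telescope (x F : ℕ) : ∀ B : ℕ, (∀ b < B, ld b x - ld (b + 1) x ≤ F) →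
    ld 0 x ≤ ld B x + B * F := by
  intro B
  induction B with
  | zero => intro _; simp
  | succ B ih =>
    intro h
    have h1 := ih fun b hb => h b (hb.trans (Nat.lt_succ_self B))
    have h2 := h B (Nat.lt_succ_self B)
    have h4 : (B + 1) * F = B * F + F := by ring
    omega

/-- The significance-`β n` depth of a length-`n` string is at most `2^(n+1)`. -/
lemma aux_ld_β_le {n x : ℕ} (hx : x ∈ Finset.Ico (2 ^ n) (2 ^ (n + 1))) :
    ld (β n) x ≤ 2 ^ (n + 1) := by
  apply Nat.find_le
  refine ⟨Code.const x, ?_, aux_evaln_const x _ (Finset.mem_Ico.1 hx).2⟩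
  exact le_trans (Finset.le_sup (f := fun x => Code.encodeCode (Code.const x)) hx)
    (Nat.le_add_left _ _)

lemma aux_dd_le_f {n x b : ℕ} (hx : x ∈ Finset.Ico (2 ^ n) (2 ^ (n + 1))) (hb : b < β n + 1) :
    ld b x - ld (b + 1) x ≤ f n := by
  refine le_trans ?_ (Finset.le_sup (f := fun x => (Finset.range (β n + 1)).sup
    fun b => ld b x - ld (b + 1) x) hx)
  exact Finset.le_sup (f := fun b => ld b x - ld (b + 1) x) (Finset.mem_range.2 hb)

/-- Main time bound under the contradiction hypothesis. -/
lemma aux_time_bound {g : ℕ → ℕ} {N : ℕ} (H : ∀ n, N ≤ n → f n ≤ g n) {n x : ℕ}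
    (hn : N ≤ n) (hx : x ∈ Finset.Ico (2 ^ n) (2 ^ (n + 1))) :
    Code.evaln (2 ^ (n + 1) + β n * g n) (Code.ofNatCode (K x)) 0 = some x := by
  have h7 := aux_telescope x (f n) (β n) fun b hb => aux_dd_le_f hx (by omega)
  have hT : T x ≤ 2 ^ (n + 1) + β n * g n := by
    calc T x ≤ ld 0 x := aux_T_le_ld_zero x
      _ ≤ ld (β n) x + β n * f n := h7
      _ ≤ 2 ^ (n + 1) + β n * g n :=
        add_le_add (aux_ld_β_le hx) (Nat.mul_le_mul_left _ (H n hn))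
  have := Code.evaln_mono hT (by rw [Option.mem_def]; exact Nat.find_spec (T_exists x))
  rwa [Option.mem_def] at this

/-! ### The "hit" predicate and counting -/

/-- `hit H x m = true` iff some index `e < m` outputs `x` within `H` steps. -/
def hit (H x : ℕ) : ℕ → Bool
  | 0 => false
  | m + 1 => hit H x m || decide (Code.evaln H (Code.ofNatCode m) 0 = some x)

lemma hit_eq_true_iff (H x : ℕ) :
    ∀ m, hit H x m = true ↔ ∃ e < m, Code.evaln H (Code.ofNatCode e) 0 = some x
  | 0 => by simp [hit]
  | m + 1 => by
    simp only [hit, Bool.or_eq_true, decide_eq_true_eq, hit_eq_true_iff H x m]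
    constructor
    · rintro (⟨e, he, hev⟩ | hev)
      · exact ⟨e, by omega, hev⟩
      · exact ⟨m, by omega, hev⟩
    · rintro ⟨e, he, hev⟩
      rcases Nat.lt_succ_iff_lt_or_eq.1 he with h | rfl
      · exact Or.inl ⟨e, h, hev⟩
      · exact Or.inr hev

/-- A string of length `n` which is not produced within `H` steps by any
index `< 2^n - 1`. -/
def goodP (n H x : ℕ) : Prop :=
  2 ^ n ≤ x ∧ x < 2 ^ (n + 1) ∧ hit H x (2 ^ n - 1) = false

instance goodP.decidable (n H x : ℕ) : Decidable (goodP n H x) := by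
  unfold goodP; infer_instance

lemma goodP_exists (n H : ℕ) : ∃ x, goodP n H x := by
  by_contra hno
  push_neg at hno
  have key : ∀ x, 2 ^ n ≤ x → x < 2 ^ (n + 1) →
      ∃ e, e < 2 ^ n - 1 ∧ Code.evaln H (Code.ofNatCode e) 0 = some x := by
    intro x h1 h2
    have := hno x
    unfold goodP at this
    have h3 : hit H x (2 ^ n - 1) = true := by
      by_contra hf
      exact this ⟨h1, h2, by simpa using hf⟩
    obtain ⟨e, he, hev⟩ := (hit_eq_true_iff H x _).1 h3
    exact ⟨e, he, hev⟩
  set F : ℕ → ℕ := fun x =>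
    if hx : ∃ e, e < 2 ^ n - 1 ∧ Code.evaln H (Code.ofNatCode e) 0 = some x
    then Nat.find hx else 0 with hF
  have hmaps : ∀ x ∈ Finset.Ico (2 ^ n) (2 ^ (n + 1)), F x ∈ Finset.range (2 ^ n - 1) := by
    intro x hx
    rw [Finset.mem_Ico] at hx
    have hex := key x hx.1 hx.2
    rw [hF]; simp only [dif_pos hex]
    exact Finset.mem_range.2 (Nat.find_spec hex).1
  have hcard : (Finset.range (2 ^ n - 1)).card < (Finset.Ico (2 ^ n) (2 ^ (n + 1))).card := by
    rw [Finset.card_range, Nat.card_Ico]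
    have h1 : (1 : ℕ) ≤ 2 ^ n := Nat.one_le_two_pow
    have h2 : 2 ^ (n + 1) = 2 * 2 ^ n := by ring
    omega
  obtain ⟨x, hxs, y, hys, hxy, hFeq⟩ :=
    Finset.exists_ne_map_eq_of_card_lt_of_maps_to hcard hmaps
  apply hxy
  rw [Finset.mem_Ico] at hxs hys
  have hexx := key x hxs.1 hxs.2
  have hexy := key y hys.1 hys.2
  have e1 := (Nat.find_spec hexx).2
  have e2 := (Nat.find_spec hexy).2
  rw [hF] at hFeq
  simp only [dif_pos hexx, dif_pos hexy] at hFeq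
  rw [hFeq] at e1
  rw [e1] at e2
  exact Option.some.inj e2

/-- The least string of length `n` avoiding all short programs within `h n` steps. -/
noncomputable def xstar (h : ℕ → ℕ) (n : ℕ) : ℕ := Nat.find (goodP_exists n (h n))

/-! ### Computability -/

lemma primrec_encodeCode : Primrec Code.encodeCode := by
  rw [← Code.encodeCode_eq]; exact Primrec.encode

lemma primrec_ofNatCode : Primrec Code.ofNatCode := by
  rw [← Code.ofNatCode_eq]; exact Primrec.ofNat Code

lemma primrec_two_pow : Primrec fun n : ℕ => 2 ^ n :=
  (Primrec₂.unpaired'.1 Nat.Primrec.pow).comp (Primrec.const 2) Primrec.id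

lemma hit_eq_rec (H x m : ℕ) :
    hit H x m = m.rec (motive := fun _ => Bool) false
      (fun m IH => IH || decide (Code.evaln H (Code.ofNatCode m) 0 = some x)) := by
  induction m with
  | zero => rfl
  | succ m ih => simp [hit, ih]

lemma primrec_hit : Primrec fun q : (ℕ × ℕ) × ℕ => hit q.1.1 q.1.2 q.2 := by
  have hdec : Primrec fun q : (ℕ × ℕ) × (ℕ × Bool) =>
      decide (Code.evaln q.1.1 (Code.ofNatCode q.2.1) 0 = some q.1.2) := by
    have hev : Primrec fun q : (ℕ × ℕ) × (ℕ × Bool) =>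
        Code.evaln q.1.1 (Code.ofNatCode q.2.1) 0 :=
      Code.primrec_evaln.comp
        (((Primrec.fst.comp Primrec.fst).pair
          (primrec_ofNatCode.comp (Primrec.fst.comp Primrec.snd))).pair (Primrec.const 0))
    have hsome : Primrec fun q : (ℕ × ℕ) × (ℕ × Bool) => (some q.1.2 : Option ℕ) :=
      Primrec.option_some.comp (Primrec.snd.comp Primrec.fst)
    exact (PrimrecRel.comp Primrec.eq hev hsome).decide
  have hg : Primrec₂ fun (a : ℕ × ℕ) (p : ℕ × Bool) =>
      p.2 || decide (Code.evaln a.1 (Code.ofNatCode p.1) 0 = some a.2) := by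
    have hcond : Primrec fun q : (ℕ × ℕ) × (ℕ × Bool) =>
        (q.2.2 || decide (Code.evaln q.1.1 (Code.ofNatCode q.2.1) 0 = some q.1.2)) :=
      (Primrec.cond (Primrec.snd.comp Primrec.snd) (Primrec.const true) hdec).of_eq
        fun q => by cases h : q.2.2 <;> simp [h]
    exact hcond.to₂
  have h := (Primrec.nat_rec (α := ℕ × ℕ) (β := Bool)
    (f := fun _ => false) (Primrec.const false) hg).comp
    (Primrec.fst (α := ℕ × ℕ) (β := ℕ)) Primrec.snd
  exact h.of_eq fun q => (hit_eq_rec q.1.1 q.1.2 q.2).symm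

lemma primrec_goodP : PrimrecPred fun q : (ℕ × ℕ) × ℕ => goodP q.1.1 q.1.2 q.2 := by
  have hpow : Primrec fun q : (ℕ × ℕ) × ℕ => 2 ^ q.1.1 :=
    primrec_two_pow.comp (Primrec.fst.comp Primrec.fst)
  have h1 : PrimrecPred fun q : (ℕ × ℕ) × ℕ => 2 ^ q.1.1 ≤ q.2 :=
    PrimrecRel.comp Primrec.nat_le hpow Primrec.snd
  have h2 : PrimrecPred fun q : (ℕ × ℕ) × ℕ => q.2 < 2 ^ (q.1.1 + 1) :=
    PrimrecRel.comp Primrec.nat_lt Primrec.snd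
      (primrec_two_pow.comp (Primrec.succ.comp (Primrec.fst.comp Primrec.fst)))
  have h3 : PrimrecPred fun q : (ℕ × ℕ) × ℕ => hit q.1.2 q.2 (2 ^ q.1.1 - 1) = false :=
    PrimrecRel.comp Primrec.eq
      (primrec_hit.comp (((Primrec.snd.comp Primrec.fst).pair Primrec.snd).pair
        (Primrec.nat_sub.comp hpow (Primrec.const 1))))
      (Primrec.const false)
  exact (h1.and (h2.and h3)).of_eq fun q => by simp [goodP]

set_option maxHeartbeats 1000000 in
lemma computable_xstar {h : ℕ → ℕ} (hh : Computable h) : Computable (xstar h) := by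
  have hp : Computable fun q : ℕ × ℕ => decide (goodP q.1 (h q.1) q.2) :=
    (primrec_goodP.decide.to_comp).comp
      ((Computable.fst.pair (hh.comp Computable.fst)).pair Computable.snd)
  have hp2 : Computable₂ fun n x : ℕ => decide (goodP n (h n) x) := hp.to₂
  have hrf := Partrec.rfind hp2.partrec₂
  apply Partrec.of_eq_tot hrf
  intro n
  rw [Nat.mem_rfind]
  constructor
  · simp only [PFun.coe_val, Part.mem_some_iff]
    exact (decide_eq_true (Nat.find_spec (goodP_exists n (h n)))).symm
  · intro m hm
    simp only [PFun.coe_val, Part.mem_some_iff]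
    exact (decide_eq_false (Nat.find_min (goodP_exists n (h n)) hm)).symm

set_option maxHeartbeats 1000000 in
theorem f_grows_faster_than_any_computable :
    ∀ g : ℕ → ℕ, Computable g → ∀ N : ℕ, ∃ n : ℕ, N ≤ n ∧ g n < f n := by
  intro g hg N
  by_contra hcon
  push_neg at hcon
  set hb : ℕ → ℕ := fun n => 2 ^ (n + 1) + β n * g n with hhb
  have hb_comp : Computable hb := by
    have h1 : Primrec fun n : ℕ => 2 ^ (n + 1) := primrec_two_pow.comp Primrec.succ
    have h2 : Primrec fun n : ℕ => Code.encodeCode (Code.const (2 ^ (n + 1) - 1)) :=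
      primrec_encodeCode.comp (Code.primrec_const.comp
        (Primrec.nat_sub.comp h1 (Primrec.const 1)))
    have h3 : Computable fun n : ℕ =>
        2 ^ (n + 1) + Code.encodeCode (Code.const (2 ^ (n + 1) - 1)) * g n :=
      (Primrec.nat_add.to_comp).comp h1.to_comp
        ((Primrec.nat_mul.to_comp).comp h2.to_comp hg)
    exact h3.of_eq fun n => by rw [hhb]; simp only [← aux_β_eq]
  have hxs := computable_xstar hb_comp
  have hF : Partrec₂ fun (c : Code) (m : ℕ) =>
      (Part.some (xstar hb (Code.encodeCode (c.comp (Code.const m)) + 2)) : Part ℕ) := by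
    have h1 : Primrec fun q : Code × ℕ => Code.encodeCode (q.1.comp (Code.const q.2)) + 2 :=
      Primrec.succ.comp (Primrec.succ.comp (primrec_encodeCode.comp
        (Code.primrec₂_comp.comp Primrec.fst (Code.primrec_const.comp Primrec.snd))))
    have h2 : Computable₂ fun (c : Code) (m : ℕ) =>
        xstar hb (Code.encodeCode (c.comp (Code.const m)) + 2) :=
      (hxs.comp h1.to_comp).to₂
    exact h2.partrec₂
  obtain ⟨c, hc⟩ := Code.fixed_point₂ hF
  set e := Code.encodeCode (c.comp (Code.const N)) with he
  set n := e + 2 with hn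
  set x := xstar hb n with hx
  have heval : Code.eval (c.comp (Code.const N)) 0 = Part.some x := by
    have h1 : Code.eval (c.comp (Code.const N)) 0 = Code.eval c N := by
      simp [Code.eval, Code.eval_const]
      exact Part.bind_some N _
    rw [h1, hc]
  have hK : K x ≤ e := aux_K_le _ heval
  obtain ⟨hx1, hx2, hx3⟩ : goodP n (hb n) x := Nat.find_spec (goodP_exists n (hb n))
  have hnN : N ≤ n := by
    have h1 : N ≤ Code.encodeCode (Code.const N) := aux_encode_const_strictMono.le_apply
    have h2 : Code.encodeCode (Code.const N) ≤ e := by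
      rw [he]
      have := Nat.right_le_pair (Code.encodeCode c) (Code.encodeCode (Code.const N))
      simp only [Code.encodeCode]
      omega
    omega
  have hev := aux_time_bound hcon hnN (Finset.mem_Ico.2 ⟨hx1, hx2⟩)
  have hev' : Code.evaln (hb n) (Code.ofNatCode (K x)) 0 = some x := hev
  have hKlt : K x < 2 ^ n - 1 := by
    have h1 : e < 2 ^ e := Nat.lt_two_pow_self
    have h2 : 2 ^ n = 4 * 2 ^ e := by rw [hn]; ring
    omega
  have hcontr : hit (hb n) x (2 ^ n - 1) = true :=
    (hit_eq_true_iff _ _ _).2 ⟨K x, hKlt, hev'⟩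
  rw [hx3] at hcontr
  exact Bool.false_ne_true hcontr
end

section
/- The Busy Beaver function BB grows faster than any computable function: for every computable g : ℕ → ℕ there exist infinitely many m with BB(m) > g(m). -/
open scoped Classical
open Nat.Partrec Nat.Partrec.Code

theorem BB_exists (c : Code) (h : (c.eval 0).Dom) : ∃ k : ℕ, (Code.evaln k c 0).isSome := by
  obtain ⟨k, hk⟩ := Code.evaln_complete.mp (Part.get_mem h)
  exact ⟨k, by rw [hk]; rfl⟩

/-- The Busy Beaver function: the maximal halting time over halting programs of index `≤ m`. -/
noncomputable def BB (m : ℕ) : ℕ :=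
  (Finset.range (m + 1)).sup fun e =>
    if h : ((Code.ofNatCode e).eval 0).Dom then Nat.find (BB_exists _ h) else 0

theorem BB_mono : Monotone BB := fun a b hab =>
  Finset.sup_mono (Finset.range_subset_range.2 (by omega))

theorem BB_grows_faster_than_any_computable :
    ∀ g : ℕ → ℕ, Computable g → ∀ N : ℕ, ∃ m : ℕ, N ≤ m ∧ g m < BB m := by
  intro g hg N
  by_contra hcon
  push_neg at hcon
  -- hcon : ∀ m, N ≤ m → BB m ≤ g m
  apply ComputablePred.halting_problem 0
  rw [ComputablePred.computable_iff]
  refine ⟨fun c => (Code.evaln (g (max (Encodable.encode c) N)) c 0).isSome, ?_, ?_⟩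
  · have hmax : Computable fun c : Code => g (max (Encodable.encode c) N) :=
      hg.comp (Primrec.nat_max.comp Primrec.encode (Primrec.const N)).to_comp
    exact Primrec.option_isSome.to_comp.comp <| Code.primrec_evaln.to_comp.comp <|
      (hmax.pair Computable.id).pair (Computable.const 0)
  · funext c
    apply propext
    constructor
    · intro h
      set m := max (Encodable.encode c) N with hm
      have hc : Code.ofNatCode (Encodable.encode c) = c := by
        rw [← Code.ofNatCode_eq]; exact Denumerable.ofNat_encode c
      have hBB : Nat.find (BB_exists c h) ≤ BB (Encodable.encode c) := by
        refine Finset.le_sup (f := fun e =>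
          if h : ((Code.ofNatCode e).eval 0).Dom then Nat.find (BB_exists _ h) else 0)
          (Finset.self_mem_range_succ _) |>.trans_eq' ?_
        rw [hc] at *
        simp [h]
      have h1 : Nat.find (BB_exists c h) ≤ g m :=
        hBB.trans ((BB_mono (le_max_left _ _)).trans (hcon m (le_max_right _ _)))
      have h2 := Nat.find_spec (BB_exists c h)
      obtain ⟨x, hx⟩ := Option.isSome_iff_exists.1 h2
      show (Code.evaln (g m) c 0).isSome = true
      rw [Code.evaln_mono h1 hx]; rfl
    · intro h
      obtain ⟨x, hx⟩ := Option.isSome_iff_exists.1 h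
      exact Part.dom_iff_mem.2 ⟨x, Code.evaln_sound hx⟩
end
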